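/- Let ξ₁, ξ₂, ξ₃ be vectors in ℝ² such that the origin lies in the interior of conv{ξ₁,ξ₂,ξ₃}. Then the weights p₁ = D(ξ₂,ξ₃)/Σ, p₂ = D(ξ₃,ξ₁)/Σ, p₃ = D(ξ₁,ξ₂)/Σ, where Σ = D(ξ₂,ξ₃)+D(ξ₃,ξ₁)+D(ξ₁,ξ₂), form the unique probability distribution on {ξ₁,ξ₂,ξ₃} satisfying p₁ξ₁+p₂ξ₂+p₃ξ₃ = 0, and for arbitrary real numbers f(ξ₁),f(ξ₂),f(ξ₃), min_{γ∈ℝ²} max_{i∈{1,2,3}} [f(ξᵢ) − ⟨ξᵢ,γ⟩] = p₁f(ξ₁)+p₂f(ξ₂)+p₃f(ξ₃). -/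

import Mathlib

noncomputable section

/-- Standard inner product on ℝ². -/
def dotp2 (u v : Fin 2 → ℝ) : ℝ := u 0 * v 0 + u 1 * v 1

/-- Oriented area of the parallelogram built on `u, v`. -/
def D2 (u v : Fin 2 → ℝ) : ℝ := u 0 * v 1 - u 1 * v 0

theorem stmt1 (ξ₁ ξ₂ ξ₃ : Fin 2 → ℝ)
    (hin : (0 : Fin 2 → ℝ) ∈ interior (convexHull ℝ ({ξ₁, ξ₂, ξ₃} : Set (Fin 2 → ℝ))))
    (f₁ f₂ f₃ : ℝ) :
    let Dsum : ℝ := D2 ξ₂ ξ₃ + D2 ξ₃ ξ₁ + D2 ξ₁ ξ₂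
    let p₁ : ℝ := D2 ξ₂ ξ₃ / Dsum
    let p₂ : ℝ := D2 ξ₃ ξ₁ / Dsum
    let p₃ : ℝ := D2 ξ₁ ξ₂ / Dsum
    let F : (Fin 2 → ℝ) → ℝ :=
      fun γ => max (max (f₁ - dotp2 ξ₁ γ) (f₂ - dotp2 ξ₂ γ)) (f₃ - dotp2 ξ₃ γ)
    -- the weights form a risk-neutral probability law
    (0 ≤ p₁ ∧ 0 ≤ p₂ ∧ 0 ≤ p₃ ∧ p₁ + p₂ + p₃ = 1 ∧
      p₁ • ξ₁ + p₂ • ξ₂ + p₃ • ξ₃ = 0) ∧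
    -- uniqueness of the risk-neutral probability law
    (∀ q₁ q₂ q₃ : ℝ, 0 ≤ q₁ → 0 ≤ q₂ → 0 ≤ q₃ → q₁ + q₂ + q₃ = 1 →
      q₁ • ξ₁ + q₂ • ξ₂ + q₃ • ξ₃ = 0 → q₁ = p₁ ∧ q₂ = p₂ ∧ q₃ = p₃) ∧
    -- the minimax equals the risk-neutral expectation
    IsLeast (Set.range F) (p₁ * f₁ + p₂ * f₂ + p₃ * f₃) := by
  intro Dsum p₁ p₂ p₃ F
  have hDdef : Dsum = D2 ξ₂ ξ₃ + D2 ξ₃ ξ₁ + D2 ξ₁ ξ₂ := rfl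
  have hp1def : p₁ = D2 ξ₂ ξ₃ / Dsum := rfl
  have hp2def : p₂ = D2 ξ₃ ξ₁ / Dsum := rfl
  have hp3def : p₃ = D2 ξ₁ ξ₂ / Dsum := rfl
  have hFdef : ∀ γ, F γ = max (max (f₁ - dotp2 ξ₁ γ) (f₂ - dotp2 ξ₂ γ)) (f₃ - dotp2 ξ₃ γ) :=
    fun _ => rfl
  -- Step 1 : Dsum ≠ 0
  have hD : Dsum ≠ 0 := by
    intro hD0
    -- find nonzero w orthogonal to ξ₂ - ξ₁ and ξ₃ - ξ₁
    obtain ⟨w, hww, hw2, hw3⟩ :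
        ∃ w : Fin 2 → ℝ, dotp2 w w ≠ 0 ∧ dotp2 w ξ₂ = dotp2 w ξ₁ ∧ dotp2 w ξ₃ = dotp2 w ξ₁ := by
      by_cases hu : ξ₂ = ξ₁
      · by_cases hv : ξ₃ = ξ₁
        · exact ⟨![1, 0], by norm_num [dotp2], by rw [hu], by rw [hv]⟩
        · have hv' : ξ₃ 0 ≠ ξ₁ 0 ∨ ξ₃ 1 ≠ ξ₁ 1 := by
            by_contra h
            push_neg at h
            exact hv (funext fun i => by fin_cases i <;> simp [h.1, h.2])
          refine ⟨![-(ξ₃ 1 - ξ₁ 1), ξ₃ 0 - ξ₁ 0], ?_, by rw [hu], ?_⟩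
          · simp only [dotp2, Matrix.cons_val_zero, Matrix.cons_val_one, Matrix.head_cons]
            refine ne_of_gt ?_
            rcases hv' with h | h <;>
              nlinarith [mul_self_pos.mpr (sub_ne_zero.mpr h),
                mul_self_nonneg (ξ₃ 0 - ξ₁ 0), mul_self_nonneg (ξ₃ 1 - ξ₁ 1)]
          · simp only [dotp2, Matrix.cons_val_zero, Matrix.cons_val_one, Matrix.head_cons]
            ring
      · have hu' : ξ₂ 0 ≠ ξ₁ 0 ∨ ξ₂ 1 ≠ ξ₁ 1 := by
          by_contra h
          push_neg at h
          exact hu (funext fun i => by fin_cases i <;> simp [h.1, h.2])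
        refine ⟨![-(ξ₂ 1 - ξ₁ 1), ξ₂ 0 - ξ₁ 0], ?_, ?_, ?_⟩
        · simp only [dotp2, Matrix.cons_val_zero, Matrix.cons_val_one, Matrix.head_cons]
          refine ne_of_gt ?_
          rcases hu' with h | h <;>
            nlinarith [mul_self_pos.mpr (sub_ne_zero.mpr h),
              mul_self_nonneg (ξ₂ 0 - ξ₁ 0), mul_self_nonneg (ξ₂ 1 - ξ₁ 1)]
        · simp only [dotp2, Matrix.cons_val_zero, Matrix.cons_val_one, Matrix.head_cons]
          ring
        · -- uses Dsum = 0 : (ξ₂-ξ₁) and (ξ₃-ξ₁) are parallel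
          simp only [dotp2, Matrix.cons_val_zero, Matrix.cons_val_one, Matrix.head_cons]
          have : D2 ξ₂ ξ₃ + D2 ξ₃ ξ₁ + D2 ξ₁ ξ₂ = 0 := by rw [← hDdef]; exact hD0
          simp only [D2] at this
          linarith
    -- the affine hyperplane {x | ⟨w,x⟩ = ⟨w,ξ₁⟩} contains the convex hull
    have hT : convexHull ℝ ({ξ₁, ξ₂, ξ₃} : Set (Fin 2 → ℝ)) ⊆
        {x | dotp2 w x = dotp2 w ξ₁} := by
      apply convexHull_min
      · intro x hx
        rcases hx with h | h | h <;> subst h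
        · rfl
        · exact hw2
        · exact hw3
      · intro x hx y hy a b ha hb hab
        simp only [Set.mem_setOf_eq, dotp2, Pi.add_apply, Pi.smul_apply,
          smul_eq_mul] at hx hy ⊢
        linear_combination a * hx + b * hy + (w 0 * ξ₁ 0 + w 1 * ξ₁ 1) * hab
    rw [mem_interior_iff_mem_nhds, Metric.mem_nhds_iff] at hin
    obtain ⟨ε, hε, hball⟩ := hin
    set c : ℝ := ε / (2 * (‖w‖ + 1)) with hc
    have hc0 : 0 < c := by positivity
    have hmem : c • w ∈ Metric.ball (0 : Fin 2 → ℝ) ε := by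
      rw [mem_ball_zero_iff, norm_smul, Real.norm_eq_abs, abs_of_pos hc0]
      calc c * ‖w‖ < c * (2 * (‖w‖ + 1)) := by nlinarith [norm_nonneg w]
        _ = ε := by rw [hc]; exact div_mul_cancel₀ _ (by positivity)
    have h1 := hT (hball hmem)
    have h2 := hT (hball (Metric.mem_ball_self hε))
    simp only [Set.mem_setOf_eq] at h1 h2
    apply hww
    have : dotp2 w (c • w) = dotp2 w 0 := h1.trans h2.symm
    simp only [dotp2, Pi.smul_apply, smul_eq_mul, Pi.zero_apply] at this
    have h3 : c * (w 0 * w 0 + w 1 * w 1) = 0 := by ring_nf; ring_nf at this; linarith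
    simp only [dotp2]
    rcases mul_eq_zero.mp h3 with h | h
    · exact absurd h (ne_of_gt hc0)
    · exact h
  -- Step 2 : uniqueness (without nonnegativity)
  have key : ∀ q₁ q₂ q₃ : ℝ, q₁ + q₂ + q₃ = 1 →
      q₁ • ξ₁ + q₂ • ξ₂ + q₃ • ξ₃ = 0 → q₁ = p₁ ∧ q₂ = p₂ ∧ q₃ = p₃ := by
    intro q₁ q₂ q₃ hs hc
    have e0 := congrFun hc 0
    have e1 := congrFun hc 1
    simp only [Pi.add_apply, Pi.smul_apply, smul_eq_mul, Pi.zero_apply] at e0 e1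
    have hD' : D2 ξ₂ ξ₃ + D2 ξ₃ ξ₁ + D2 ξ₁ ξ₂ ≠ 0 := by rw [← hDdef]; exact hD
    refine ⟨?_, ?_, ?_⟩
    · rw [hp1def, hDdef, eq_div_iff hD']
      simp only [D2]
      linear_combination (ξ₂ 1 - ξ₃ 1) * e0 + (ξ₃ 0 - ξ₂ 0) * e1 +
        (ξ₂ 0 * ξ₃ 1 - ξ₂ 1 * ξ₃ 0) * hs
    · rw [hp2def, hDdef, eq_div_iff hD']
      simp only [D2]
      linear_combination (ξ₃ 1 - ξ₁ 1) * e0 + (ξ₁ 0 - ξ₃ 0) * e1 +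
        (ξ₃ 0 * ξ₁ 1 - ξ₃ 1 * ξ₁ 0) * hs
    · rw [hp3def, hDdef, eq_div_iff hD']
      simp only [D2]
      linear_combination (ξ₁ 1 - ξ₂ 1) * e0 + (ξ₂ 0 - ξ₁ 0) * e1 +
        (ξ₁ 0 * ξ₂ 1 - ξ₁ 1 * ξ₂ 0) * hs
  -- Step 3 : the p's sum to 1 and are risk neutral
  have hpsum : p₁ + p₂ + p₃ = 1 := by
    rw [hp1def, hp2def, hp3def, hDdef]
    have hD' : D2 ξ₂ ξ₃ + D2 ξ₃ ξ₁ + D2 ξ₁ ξ₂ ≠ 0 := by rw [← hDdef]; exact hD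
    rw [← add_div, ← add_div, div_self hD']
  have hpcomb : p₁ • ξ₁ + p₂ • ξ₂ + p₃ • ξ₃ = 0 := by
    have hD' : D2 ξ₂ ξ₃ + D2 ξ₃ ξ₁ + D2 ξ₁ ξ₂ ≠ 0 := by rw [← hDdef]; exact hD
    funext i
    simp only [Pi.add_apply, Pi.smul_apply, smul_eq_mul, Pi.zero_apply,
      hp1def, hp2def, hp3def, hDdef]
    fin_cases i <;>
    · rw [div_mul_eq_mul_div, div_mul_eq_mul_div, div_mul_eq_mul_div, ← add_div,
        ← add_div, div_eq_zero_iff]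
      left
      simp only [D2, Fin.mk_zero, Fin.mk_one]
      ring
  -- Step 4 : nonnegativity of the p's, via existence of barycentric weights for 0
  obtain ⟨hp1, hp2, hp3⟩ : 0 ≤ p₁ ∧ 0 ≤ p₂ ∧ 0 ≤ p₃ := by
    have h0 : (0 : Fin 2 → ℝ) ∈ convexHull ℝ ({ξ₁, ξ₂, ξ₃} : Set (Fin 2 → ℝ)) :=
      interior_subset hin
    rw [show ({ξ₁, ξ₂, ξ₃} : Set (Fin 2 → ℝ)) = insert ξ₁ {ξ₂, ξ₃} from rfl,
      convexHull_insert ⟨ξ₂, by simp⟩, convexHull_pair, mem_convexJoin] at h0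
    obtain ⟨u, hu, x, hx, h0⟩ := h0
    rw [Set.mem_singleton_iff] at hu
    obtain ⟨c, d, hc, hd, hcd, hxeq⟩ := hx
    obtain ⟨a, b, ha, hb, hab, habeq⟩ := h0
    rw [hu] at habeq
    have hcomb : a • ξ₁ + (b * c) • ξ₂ + (b * d) • ξ₃ = 0 := by
      rw [← habeq, ← hxeq]
      funext i
      simp only [Pi.add_apply, Pi.smul_apply, smul_eq_mul]
      ring
    have hsum : a + b * c + b * d = 1 := by linear_combination hab + b * hcd
    obtain ⟨h1, h2, h3⟩ := key a (b * c) (b * d) hsum hcomb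
    exact ⟨h1 ▸ ha, h2 ▸ mul_nonneg hb hc, h3 ▸ mul_nonneg hb hd⟩
  -- risk-neutral expected value kills the linear part
  have hlin : ∀ γ : Fin 2 → ℝ,
      p₁ * dotp2 ξ₁ γ + p₂ * dotp2 ξ₂ γ + p₃ * dotp2 ξ₃ γ = 0 := by
    intro γ
    have c0 := congrFun hpcomb 0
    have c1 := congrFun hpcomb 1
    simp only [Pi.add_apply, Pi.smul_apply, smul_eq_mul, Pi.zero_apply] at c0 c1
    simp only [dotp2]
    linear_combination γ 0 * c0 + γ 1 * c1
  refine ⟨⟨hp1, hp2, hp3, hpsum, hpcomb⟩,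
    fun q₁ q₂ q₃ _ _ _ hs hc => key q₁ q₂ q₃ hs hc, ?_, ?_⟩
  -- the minimax value is attained
  · set E : ℝ := p₁ * f₁ + p₂ * f₂ + p₃ * f₃ with hE
    have hD' : D2 ξ₂ ξ₃ + D2 ξ₃ ξ₁ + D2 ξ₁ ξ₂ ≠ 0 := by rw [← hDdef]; exact hD
    have hEsum : E * (D2 ξ₂ ξ₃ + D2 ξ₃ ξ₁ + D2 ξ₁ ξ₂) =
        D2 ξ₂ ξ₃ * f₁ + D2 ξ₃ ξ₁ * f₂ + D2 ξ₁ ξ₂ * f₃ := by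
      rw [hE, hp1def, hp2def, hp3def, hDdef]
      field_simp
      try ring
    simp only [D2] at hEsum
    set γs : Fin 2 → ℝ := ![((f₁ - E) * (ξ₂ 1 - ξ₃ 1) + (f₂ - E) * (ξ₃ 1 - ξ₁ 1) +
        (f₃ - E) * (ξ₁ 1 - ξ₂ 1)) / Dsum,
      ((f₁ - E) * (ξ₃ 0 - ξ₂ 0) + (f₂ - E) * (ξ₁ 0 - ξ₃ 0) +
        (f₃ - E) * (ξ₂ 0 - ξ₁ 0)) / Dsum] with hγs
    have hcoord : ∀ ξ : Fin 2 → ℝ, dotp2 ξ γs =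
        (ξ 0 * ((f₁ - E) * (ξ₂ 1 - ξ₃ 1) + (f₂ - E) * (ξ₃ 1 - ξ₁ 1) +
          (f₃ - E) * (ξ₁ 1 - ξ₂ 1)) +
         ξ 1 * ((f₁ - E) * (ξ₃ 0 - ξ₂ 0) + (f₂ - E) * (ξ₁ 0 - ξ₃ 0) +
          (f₃ - E) * (ξ₂ 0 - ξ₁ 0))) / Dsum := by
      intro ξ
      simp only [dotp2, hγs, Matrix.cons_val_zero, Matrix.cons_val_one, Matrix.head_cons]
      field_simp
    have h1 : dotp2 ξ₁ γs = f₁ - E := by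
      rw [hcoord, div_eq_iff hD, hDdef]
      simp only [D2]
      linear_combination hEsum
    have h2 : dotp2 ξ₂ γs = f₂ - E := by
      rw [hcoord, div_eq_iff hD, hDdef]
      simp only [D2]
      linear_combination hEsum
    have h3 : dotp2 ξ₃ γs = f₃ - E := by
      rw [hcoord, div_eq_iff hD, hDdef]
      simp only [D2]
      linear_combination hEsum
    refine ⟨γs, ?_⟩
    rw [hFdef, h1, h2, h3]
    simp only [sub_sub_cancel, max_self]
  · rintro y ⟨γ, rfl⟩
    rw [hFdef]
    set M : ℝ := max (max (f₁ - dotp2 ξ₁ γ) (f₂ - dotp2 ξ₂ γ)) (f₃ - dotp2 ξ₃ γ) with hM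
    have hm1 : f₁ - dotp2 ξ₁ γ ≤ M := le_max_of_le_left (le_max_left _ _)
    have hm2 : f₂ - dotp2 ξ₂ γ ≤ M := le_max_of_le_left (le_max_right _ _)
    have hm3 : f₃ - dotp2 ξ₃ γ ≤ M := le_max_right _ _
    have hl := hlin γ
    calc p₁ * f₁ + p₂ * f₂ + p₃ * f₃
        = p₁ * (f₁ - dotp2 ξ₁ γ) + p₂ * (f₂ - dotp2 ξ₂ γ) + p₃ * (f₃ - dotp2 ξ₃ γ) := by
          linear_combination hl
      _ ≤ p₁ * M + p₂ * M + p₃ * M :=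
          add_le_add (add_le_add (mul_le_mul_of_nonneg_left hm1 hp1)
            (mul_le_mul_of_nonneg_left hm2 hp2)) (mul_le_mul_of_nonneg_left hm3 hp3)
      _ = M := by linear_combination M * hpsum
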